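/- Let F be a field of characteristic zero containing an element q that is nonzero and not a root of unity, and let σ be the F-algebra automorphism of F[y] with σ(y) = q·y. Then a nonzero polynomial p ∈ F[y] is σ-special (p divides σ^ℓ(p) for some nonzero integer ℓ) if and only if p = c·y^k for some c ∈ F, c ≠ 0, and some natural number k. -/

import Mathlib

open Polynomial

/-- In the q-shift case, a nonzero polynomial is σ-special iff it is
a nonzero constant times a power of `y`. -/
theorem sigma_special_iff_monomial_qshift (F : Type*) [Field F] [CharZero F]
    (q : F) (hq0 : q ≠ 0) (hqru : ∀ n : ℕ, 0 < n → q ^ n ≠ 1)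
    (σ : RingAut (Polynomial F))
    (hC : ∀ c : F, σ (C c) = C c)
    (hX : σ X = C q * X)
    (p : Polynomial F) (hp0 : p ≠ 0) :
    (∃ ℓ : ℤ, ℓ ≠ 0 ∧ p ∣ (σ ^ ℓ) p) ↔
      (∃ (c : F) (k : ℕ), c ≠ 0 ∧ p = C c * X ^ k) := by
  -- coefficient formula for σ
  have hcoeff1 : ∀ (r : Polynomial F) (n : ℕ), (σ r).coeff n = q ^ n * r.coeff n := by
    intro r
    induction r using Polynomial.induction_on' with
    | add f g hf hg =>
      intro n; rw [map_add, coeff_add, hf, hg, coeff_add]; ring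
    | monomial m a =>
      intro n
      rw [← C_mul_X_pow_eq_monomial, map_mul, map_pow, hC, hX, mul_pow, ← C_pow]
      simp only [mul_assoc, coeff_C_mul, coeff_X_pow]
      split_ifs with h
      · subst h; ring
      · simp
  -- coefficient formula for σ⁻¹
  have hcoeffinv : ∀ (r : Polynomial F) (n : ℕ), (σ⁻¹ r).coeff n = (q ^ n)⁻¹ * r.coeff n := by
    intro r n
    have h1 : σ (σ⁻¹ r) = r := σ.apply_symm_apply r
    have h2 := hcoeff1 (σ⁻¹ r) n
    rw [h1] at h2
    field_simp [pow_ne_zero n hq0] at h2 ⊢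
    rw [h2]
  -- coefficient formula for σ^ℓ, ℓ : ℤ
  have hz : ∀ (ℓ : ℤ) (r : Polynomial F) (n : ℕ),
      ((σ ^ ℓ) r).coeff n = q ^ (ℓ * n) * r.coeff n := by
    intro ℓ
    induction ℓ using Int.induction_on with
    | zero => intro r n; simp only [zero_mul, zpow_zero, one_mul, zpow_zero]; rfl
    | succ i ih =>
      intro r n
      have : (σ ^ ((i:ℤ) + 1)) r = (σ ^ (i:ℤ)) (σ r) := by rw [zpow_add_one]; rfl
      rw [this, ih, hcoeff1]
      rw [← mul_assoc, ← zpow_natCast q n, ← zpow_add₀ hq0]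
      ring_nf
    | pred i ih =>
      intro r n
      have : (σ ^ (-(i:ℤ) - 1)) r = (σ ^ (-(i:ℤ))) (σ⁻¹ r) := by rw [zpow_sub_one]; rfl
      rw [this, ih, hcoeffinv]
      rw [← mul_assoc, ← zpow_natCast q n, ← zpow_neg, ← zpow_add₀ hq0]
      ring_nf
  -- q^z ≠ 1 for z ≠ 0
  have hqz : ∀ z : ℤ, z ≠ 0 → q ^ z ≠ 1 := by
    intro z hzne h1
    rcases lt_trichotomy z 0 with hlt | heq | hgt
    · have h2 : q ^ (-z) = 1 := by rw [zpow_neg, h1, inv_one]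
      lift -z to ℕ using (by omega) with m hm
      rw [zpow_natCast] at h2
      exact hqru m (by omega) h2
    · exact hzne heq
    · lift z to ℕ using (by omega) with m hm
      rw [zpow_natCast] at h1
      exact hqru m (by omega) h1
  constructor
  · rintro ⟨ℓ, hℓ, r, hr⟩
    have hσp0 : (σ ^ ℓ) p ≠ 0 := by
      intro h
      exact hp0 (by simpa using (EmbeddingLike.map_eq_zero_iff).mp h)
    have hr0 : r ≠ 0 := by rintro rfl; rw [mul_zero] at hr; exact hσp0 hr
    have key : ∀ n, ((σ ^ ℓ) p).coeff n = 0 ↔ p.coeff n = 0 := by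
      intro n
      rw [hz]
      constructor
      · intro h
        rcases mul_eq_zero.mp h with h | h
        · exact absurd h (zpow_ne_zero _ hq0)
        · exact h
      · intro h; rw [h, mul_zero]
    have hdeg : ((σ ^ ℓ) p).natDegree = p.natDegree :=
      le_antisymm
        (natDegree_le_iff_coeff_eq_zero.mpr fun m hm =>
          (key m).mpr (coeff_eq_zero_of_natDegree_lt hm))
        (natDegree_le_iff_coeff_eq_zero.mpr fun m hm =>
          (key m).mp (coeff_eq_zero_of_natDegree_lt hm))
    have hdr : r.natDegree = 0 := by
      have h := natDegree_mul hp0 hr0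
      rw [← hr, hdeg] at h; omega
    have hrC : r = C (r.coeff 0) := eq_C_of_natDegree_eq_zero hdr
    set c' := r.coeff 0 with hc'
    -- coefficient equation
    have hce : ∀ n : ℕ, p.coeff n ≠ 0 → q ^ (ℓ * n) = c' := by
      intro n hn
      have h1 : ((σ ^ ℓ) p).coeff n = q ^ (ℓ * n) * p.coeff n := hz ℓ p n
      have h2 : ((σ ^ ℓ) p).coeff n = p.coeff n * c' := by
        rw [hr, hrC, coeff_mul_C]
      rw [h2, mul_comm (p.coeff n)] at h1
      exact mul_right_cancel₀ hn h1.symm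
    set k := p.natDegree with hk
    have hpk : p.coeff k ≠ 0 := mt leadingCoeff_eq_zero.mp hp0
    have huniq : ∀ n : ℕ, n ≠ k → p.coeff n = 0 := by
      intro n hne
      by_contra hn
      have h1 := hce n hn
      have h2 := hce k hpk
      have h3 : q ^ (ℓ * n - ℓ * k) = 1 := by
        rw [zpow_sub₀ hq0, h1, h2, div_self]
        intro hc0
        exact hpk (by rw [← h2] at hc0; exact absurd hc0 (zpow_ne_zero _ hq0))
      refine hqz (ℓ * n - ℓ * k) ?_ h3
      have : (n : ℤ) ≠ (k : ℤ) := by exact_mod_cast hne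
      intro hzero
      apply this
      have : ℓ * ((n : ℤ) - k) = 0 := by linarith
      rcases mul_eq_zero.mp this with h | h
      · exact absurd h hℓ
      · linarith
    refine ⟨p.coeff k, k, hpk, ?_⟩
    ext n
    rw [coeff_C_mul, coeff_X_pow]
    by_cases h : n = k
    · subst h; simp
    · simp [h, huniq n h]
  · rintro ⟨c, k, hc, rfl⟩
    refine ⟨1, one_ne_zero, ?_⟩
    have h : (σ ^ (1:ℤ)) (C c * X ^ k) = C (q ^ k) * (C c * X ^ k) := by
      rw [zpow_one, map_mul, map_pow, hC, hX, mul_pow, ← C_pow]; ring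
    rw [h]
    exact dvd_mul_left _ _
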